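/- Let B ∈ ℂ^{m×n}, W ∈ ℂ^{n×m}, let k be a natural number with k = ind(WB), let H be the Moore–Penrose inverse of B, let G be the Moore–Penrose inverse of (W·B)^k, let Z be a minimal rank W-weighted right weak Drazin inverse of B, and let Q ∈ ℂ^{n×m} satisfy B·Q·B = B. Then the following are equivalent: (i) W·Z·W·B·H = W·Z·W·B·Q; (ii) (W·B)^{k+1}·Q = (W·B)^{k+1}·H; (iii) N((W·B)^{k+1}·Q) = N((W·B)^{k+1}·H); (iv) N((W·B)^{k+1}·Q) ⊆ N((W·B)^{k+1}·H); (v) there exists U ∈ ℂ^{n×m} such that Q = H + (I − G·(W·B)^k)·U. -/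
import Mathlib


open Matrix

/-- The index of a square complex matrix: the least `j` with `rank (M^j) = rank (M^(j+1))`. -/
noncomputable def matIndex {p : ℕ} (M : Matrix (Fin p) (Fin p) ℂ) : ℕ :=
  sInf {j : ℕ | (M ^ j).rank = (M ^ (j + 1)).rank}

/-- The column space of a complex matrix: the range of `v ↦ M *ᵥ v`. -/
noncomputable def colSpace {a b : ℕ} (M : Matrix (Fin a) (Fin b) ℂ) :
    Submodule ℂ (Fin a → ℂ) :=
  LinearMap.range M.mulVecLin

/-- The null space of a complex matrix: the kernel of `v ↦ M *ᵥ v`. -/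
noncomputable def nullSpace {a b : ℕ} (M : Matrix (Fin a) (Fin b) ℂ) :
    Submodule ℂ (Fin b → ℂ) :=
  LinearMap.ker M.mulVecLin

lemma mem_nullSpace {a b : ℕ} {M : Matrix (Fin a) (Fin b) ℂ} {v : Fin b → ℂ} :
    v ∈ nullSpace M ↔ M *ᵥ v = 0 := by
  simp [nullSpace, LinearMap.mem_ker, Matrix.mulVecLin_apply]

lemma aux_mulVec_ext {a b : ℕ} {M N : Matrix (Fin a) (Fin b) ℂ}
    (h : ∀ v, M *ᵥ v = N *ᵥ v) : M = N := by
  ext i j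
  have := congrFun (h (Pi.single j 1)) i
  simpa using this

lemma aux_nullity {a b : ℕ} (M : Matrix (Fin a) (Fin b) ℂ) :
    M.rank + Module.finrank ℂ (nullSpace M) = b := by
  have := LinearMap.finrank_range_add_finrank_ker M.mulVecLin
  rw [Module.finrank_fintype_fun_eq_card, Fintype.card_fin] at this
  exact this

lemma aux_null_eq {a b c : ℕ} (M1 : Matrix (Fin a) (Fin c) ℂ) (M2 : Matrix (Fin b) (Fin c) ℂ)
    (hle : nullSpace M1 ≤ nullSpace M2) (hr : M1.rank ≤ M2.rank) :
    nullSpace M1 = nullSpace M2 := by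
  refine Submodule.eq_of_le_of_finrank_eq hle ?_
  have h1 := aux_nullity M1
  have h2 := aux_nullity M2
  have hm := Submodule.finrank_mono hle
  omega

lemma aux_mul_proj {a b c : ℕ} (X : Matrix (Fin a) (Fin b) ℂ) (A : Matrix (Fin c) (Fin b) ℂ)
    (P : Matrix (Fin b) (Fin b) ℂ) (hP : A * P = A) (hker : nullSpace A ≤ nullSpace X) :
    X * P = X := by
  apply aux_mulVec_ext
  intro v
  have hv : A *ᵥ (P *ᵥ v - v) = 0 := by
    rw [Matrix.mulVec_sub, Matrix.mulVec_mulVec, hP, sub_self]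
  have hx : X *ᵥ (P *ᵥ v - v) = 0 := mem_nullSpace.mp (hker (mem_nullSpace.mpr hv))
  rw [Matrix.mulVec_sub] at hx
  rw [← Matrix.mulVec_mulVec, sub_eq_zero.mp hx]

lemma aux_mul_zero {a b c d : ℕ} (M1 : Matrix (Fin a) (Fin c) ℂ) (X : Matrix (Fin b) (Fin c) ℂ)
    (Y : Matrix (Fin c) (Fin d) ℂ) (hle : nullSpace M1 ≤ nullSpace X) (h : M1 * Y = 0) :
    X * Y = 0 := by
  apply aux_mulVec_ext
  intro v
  have hv : M1 *ᵥ (Y *ᵥ v) = 0 := by rw [Matrix.mulVec_mulVec, h, Matrix.zero_mulVec]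
  have h2 := mem_nullSpace.mp (hle (mem_nullSpace.mpr hv))
  rw [Matrix.zero_mulVec, ← Matrix.mulVec_mulVec]
  exact h2

lemma aux_comm {m n : ℕ} (B : Matrix (Fin m) (Fin n) ℂ) (W : Matrix (Fin n) (Fin m) ℂ) :
    ∀ j : ℕ, (W * B) ^ j * W = W * (B * W) ^ j := by
  intro j
  induction j with
  | zero => simp
  | succ j ih =>
    calc (W * B) ^ (j + 1) * W = ((W * B) ^ j * W) * (B * W) := by
          simp only [pow_succ, Matrix.mul_assoc]
      _ = W * ((B * W) ^ j * (B * W)) := by rw [ih, Matrix.mul_assoc]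
      _ = W * (B * W) ^ (j + 1) := by rw [← pow_succ]

lemma matIndex_spec {p : ℕ} (M : Matrix (Fin p) (Fin p) ℂ) :
    (M ^ matIndex M).rank = (M ^ (matIndex M + 1)).rank := by
  have hne : {j : ℕ | (M ^ j).rank = (M ^ (j + 1)).rank}.Nonempty := by
    by_contra h
    rw [Set.not_nonempty_iff_eq_empty] at h
    have hlt : ∀ j, (M ^ (j + 1)).rank < (M ^ j).rank := by
      intro j
      have hle : (M ^ (j + 1)).rank ≤ (M ^ j).rank := by
        rw [pow_succ]; exact Matrix.rank_mul_le_left _ _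
      have hne' : (M ^ j).rank ≠ (M ^ (j + 1)).rank := by
        intro hh
        have hmem : j ∈ {j : ℕ | (M ^ j).rank = (M ^ (j + 1)).rank} := hh
        rw [h] at hmem
        exact hmem
      omega
    have key : ∀ j, (M ^ j).rank + j ≤ (M ^ 0).rank := by
      intro j
      induction j with
      | zero => simp
      | succ j ih => have := hlt j; omega
    have := key ((M ^ 0).rank + 1)
    omega
  exact Nat.sInf_mem hne


/-- **Lemma 3.13.** Characterization of the inner inverses `Q` of `B` for which
`W·Z·W·B·Q` is the W-weighted weak DMP inverse. -/
theorem weighted_weak_DMP_inner_inverse {m n : ℕ}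
    (B : Matrix (Fin m) (Fin n) ℂ) (W : Matrix (Fin n) (Fin m) ℂ)
    (k : ℕ) (hk : k = matIndex (W * B))
    (H : Matrix (Fin n) (Fin m) ℂ)
    (hH1 : B * H * B = B) (hH2 : H * B * H = H)
    (hH3 : (B * H)ᴴ = B * H) (hH4 : (H * B)ᴴ = H * B)
    (G : Matrix (Fin n) (Fin n) ℂ)
    (hG1 : (W * B) ^ k * G * (W * B) ^ k = (W * B) ^ k)
    (hG2 : G * (W * B) ^ k * G = G)
    (hG3 : ((W * B) ^ k * G)ᴴ = (W * B) ^ k * G)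
    (hG4 : (G * (W * B) ^ k)ᴴ = G * (W * B) ^ k)
    (Z : Matrix (Fin m) (Fin n) ℂ)
    (hZ1 : W * (B * W) ^ (k + 1) * Z = (W * B) ^ k)
    (hZ2 : Z.rank = ((W * B) ^ k).rank)
    (Q : Matrix (Fin n) (Fin m) ℂ) (hQ : B * Q * B = B) :
    [ W * Z * W * B * H = W * Z * W * B * Q,
      (W * B) ^ (k + 1) * Q = (W * B) ^ (k + 1) * H,
      nullSpace ((W * B) ^ (k + 1) * Q) = nullSpace ((W * B) ^ (k + 1) * H),
      nullSpace ((W * B) ^ (k + 1) * Q) ≤ nullSpace ((W * B) ^ (k + 1) * H),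
      ∃ U : Matrix (Fin n) (Fin m) ℂ, Q = H + (1 - G * (W * B) ^ k) * U ].TFAE := by
  -- index property
  have hidx : ((W * B) ^ k).rank = ((W * B) ^ (k + 1)).rank := by
    rw [hk]; exact matIndex_spec (W * B)
  -- reformulation of hZ1
  have hZ1' : (W * B) ^ (k + 1) * (W * Z) = (W * B) ^ k := by
    rw [← Matrix.mul_assoc, aux_comm B W (k + 1), Matrix.mul_assoc,
      ← Matrix.mul_assoc W _ Z, hZ1]
  -- null space of Z equals null space of (W*B)^k
  have hkerZ : nullSpace Z = nullSpace ((W * B) ^ k) := by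
    refine aux_null_eq Z ((W * B) ^ k) ?_ (le_of_eq hZ2)
    intro v hv
    rw [mem_nullSpace] at hv ⊢
    rw [← hZ1', ← Matrix.mulVec_mulVec, ← Matrix.mulVec_mulVec, hv, Matrix.mulVec_zero,
      Matrix.mulVec_zero]
  -- null space of (W*B)^k equals null space of (W*B)^(k+1)
  have hkerPow : nullSpace ((W * B) ^ k) = nullSpace ((W * B) ^ (k + 1)) := by
    refine aux_null_eq _ _ ?_ (le_of_eq hidx)
    intro v hv
    rw [mem_nullSpace] at hv ⊢
    rw [pow_succ', ← Matrix.mulVec_mulVec, hv, Matrix.mulVec_zero]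
  -- Z absorbs the projection G * (W*B)^k
  have hZproj : Z * (G * (W * B) ^ k) = Z := by
    refine aux_mul_proj Z ((W * B) ^ k) _ ?_ ?_
    · rw [← Matrix.mul_assoc]; exact hG1
    · rw [← hkerZ]
  -- (W*B)^(k+1) * Q * B = (W*B)^(k+1) and same for H
  have hQB : (W * B) ^ (k + 1) * Q * B = (W * B) ^ (k + 1) := by
    calc (W * B) ^ (k + 1) * Q * B = (W * B) ^ k * (W * (B * Q * B)) := by
          simp only [pow_succ, Matrix.mul_assoc]
      _ = (W * B) ^ (k + 1) := by rw [hQ, ← pow_succ]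
  have hHB : (W * B) ^ (k + 1) * H * B = (W * B) ^ (k + 1) := by
    calc (W * B) ^ (k + 1) * H * B = (W * B) ^ k * (W * (B * H * B)) := by
          simp only [pow_succ, Matrix.mul_assoc]
      _ = (W * B) ^ (k + 1) := by rw [hH1, ← pow_succ]
  -- key factorizations
  have key : ∀ X : Matrix (Fin n) (Fin m) ℂ,
      W * Z * W * B * X = W * (Z * (G * ((W * B) ^ (k + 1) * X))) := by
    intro X
    calc W * Z * W * B * X = W * (Z * (G * (W * B) ^ k)) * W * B * X := by rw [hZproj]
      _ = W * (Z * (G * ((W * B) ^ (k + 1) * X))) := by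
          simp only [pow_succ, Matrix.mul_assoc]
  have key2 : ∀ X : Matrix (Fin n) (Fin m) ℂ,
      (W * B) ^ (k + 1) * (W * Z * W * B * X) = (W * B) ^ (k + 1) * X := by
    intro X
    calc (W * B) ^ (k + 1) * (W * Z * W * B * X)
        = ((W * B) ^ (k + 1) * (W * Z)) * (W * B * X) := by
          simp only [Matrix.mul_assoc]
      _ = (W * B) ^ k * (W * B * X) := by rw [hZ1']
      _ = (W * B) ^ (k + 1) * X := by simp only [pow_succ, Matrix.mul_assoc]
  tfae_have 1 → 2 := by
    intro h1
    rw [← key2 Q, ← key2 H, h1]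
  tfae_have 2 → 1 := by
    intro h2
    rw [key H, key Q, h2]
  tfae_have 2 → 3 := by
    intro h2
    rw [h2]
  tfae_have 3 → 4 := fun h3 => h3.le
  tfae_have 4 → 3 := by
    intro h4
    have hrQ : ((W * B) ^ (k + 1) * Q).rank = ((W * B) ^ (k + 1)).rank := by
      refine le_antisymm (Matrix.rank_mul_le_left _ _) ?_
      conv_lhs => rw [← hQB]
      exact Matrix.rank_mul_le_left _ _
    have hrH : ((W * B) ^ (k + 1) * H).rank = ((W * B) ^ (k + 1)).rank := by
      refine le_antisymm (Matrix.rank_mul_le_left _ _) ?_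
      conv_lhs => rw [← hHB]
      exact Matrix.rank_mul_le_left _ _
    exact aux_null_eq _ _ h4 (by rw [hrQ, hrH])
  tfae_have 3 → 2 := by
    intro h3
    have hker : nullSpace H ≤ nullSpace ((W * B) ^ (k + 1) * Q) := by
      rw [h3]
      intro v hv
      rw [mem_nullSpace] at hv ⊢
      rw [← Matrix.mulVec_mulVec, hv, Matrix.mulVec_zero]
    have step : (W * B) ^ (k + 1) * Q * (B * H) = (W * B) ^ (k + 1) * Q := by
      refine aux_mul_proj _ H _ ?_ hker
      rw [← Matrix.mul_assoc]; exact hH2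
    calc (W * B) ^ (k + 1) * Q = (W * B) ^ (k + 1) * Q * (B * H) := step.symm
      _ = ((W * B) ^ (k + 1) * Q * B) * H := by simp only [Matrix.mul_assoc]
      _ = (W * B) ^ (k + 1) * H := by rw [hQB]
  tfae_have 2 → 5 := by
    intro h2
    refine ⟨Q - H, ?_⟩
    have hzero : (W * B) ^ (k + 1) * (Q - H) = 0 := by
      rw [Matrix.mul_sub, h2, sub_self]
    have hzero2 : (W * B) ^ k * (Q - H) = 0 :=
      aux_mul_zero ((W * B) ^ (k + 1)) ((W * B) ^ k) (Q - H) hkerPow.ge hzero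
    rw [Matrix.sub_mul, Matrix.one_mul, Matrix.mul_assoc G, hzero2, Matrix.mul_zero, sub_zero]
    abel
  tfae_have 5 → 2 := by
    rintro ⟨U, hU⟩
    have hpow : (W * B) ^ (k + 1) * (G * (W * B) ^ k) = (W * B) ^ (k + 1) := by
      calc (W * B) ^ (k + 1) * (G * (W * B) ^ k)
          = (W * B) * ((W * B) ^ k * G * (W * B) ^ k) := by
            simp only [pow_succ', Matrix.mul_assoc]
        _ = (W * B) ^ (k + 1) := by rw [hG1, ← pow_succ']
    rw [hU, Matrix.mul_add, ← Matrix.mul_assoc, Matrix.mul_sub, Matrix.mul_one, hpow, sub_self,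
      Matrix.zero_mul, add_zero]
  tfae_finish
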